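/- For every real A > 1, every real t > 0 and every d ∈ ℕ, the (d+1)-dimensional Lebesgue volume of the set {c = (c₀,…,c_d) ∈ ℝ^{d+1} : ∑_{n=0}^∞ P_c(n)²·A^{−2n} ≤ t²} equals (A²−1)^{(d+1)²/2}·A^{−(d+1)(d+2)/2}·t^{d+1}·ω_{d+1}, where ω_{d+1} is the Lebesgue volume of the unit Euclidean ball in ℝ^{d+1}. -/

import Mathlib

open MeasureTheory

/-- The binomial polynomial `binom(x,k) = x(x-1)⋯(x-k+1)/k!`. -/
noncomputable def binom (x : ℝ) (k : ℕ) : ℝ :=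
  (∏ i ∈ Finset.range k, (x - i)) / (Nat.factorial k)

lemma binom_zero (x : ℝ) : binom x 0 = 1 := by simp [binom]

lemma binom_natCast (n k : ℕ) : binom (n : ℝ) k = (n.choose k : ℝ) := by
  rcases lt_or_ge n k with h | h
  · have h0 : ((n : ℝ) - (n : ℕ)) = 0 := by simp
    rw [binom, Finset.prod_eq_zero (Finset.mem_range.2 h) h0, Nat.choose_eq_zero_of_lt h]
    simp
  · have hprod : (∏ i ∈ Finset.range k, ((n : ℝ) - i)) = (n.descFactorial k : ℝ) := by
      rw [Nat.descFactorial_eq_prod_range, Nat.cast_prod]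
      refine Finset.prod_congr rfl fun i hi => ?_
      rw [Nat.cast_sub (le_trans (Finset.mem_range.1 hi).le h)]
    rw [binom, hprod, Nat.descFactorial_eq_factorial_mul_choose, Nat.cast_mul]
    field_simp

/-- Pascal's rule for the binomial polynomial. -/
lemma binom_pascal (x : ℝ) (k : ℕ) : binom (x + 1) (k + 1) = binom x (k + 1) + binom x k := by
  have h1 : (∏ i ∈ Finset.range (k+1), (x + 1 - i)) = (∏ i ∈ Finset.range k, (x - i)) * (x + 1) := by
    rw [Finset.prod_range_succ']
    congr 1
    · refine Finset.prod_congr rfl fun i _ => ?_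
      push_cast; ring
    · simp
  have h2 : (∏ i ∈ Finset.range (k+1), (x - i)) = (∏ i ∈ Finset.range k, (x - i)) * (x - k) := by
    rw [Finset.prod_range_succ]
  rw [binom, binom, binom, h1, h2, Nat.factorial_succ]
  have hk : (Nat.factorial k : ℝ) ≠ 0 := Nat.cast_ne_zero.2 (Nat.factorial_ne_zero k)
  have hk1 : ((k:ℝ) + 1) ≠ 0 := by positivity
  field_simp
  push_cast
  ring

lemma binom_nat_lt {n b : ℕ} (h : n < b) : binom (n : ℝ) b = 0 := by
  rw [binom_natCast, Nat.choose_eq_zero_of_lt h, Nat.cast_zero]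

/-- `pf q j k x = q^{-N} Δ^j (q^N binom(N,k))` evaluated at `x`. -/
noncomputable def pf (q : ℝ) (j k : ℕ) (x : ℝ) : ℝ :=
  ∑ i ∈ Finset.range (j + 1), (j.choose i : ℝ) * q ^ i * (q - 1) ^ (j - i) * binom x (k - i)

lemma pf_zero (q : ℝ) (k : ℕ) (x : ℝ) : pf q 0 k x = binom x k := by
  simp [pf]

lemma pf_succ (q : ℝ) (j k : ℕ) (x : ℝ) :
    pf q (j+1) k x = (q-1) * pf q j k x
      + ∑ i ∈ Finset.range (j+1), (j.choose i : ℝ) * q^(i+1) * (q-1)^(j-i) * binom x (k-(i+1)) := by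
  have A : pf q (j+1) k x
      = (∑ i ∈ Finset.range (j+1), ((j+1).choose (i+1) : ℝ) * q^(i+1) * (q-1)^(j-i) * binom x (k-(i+1)))
        + (q-1)^(j+1) * binom x k := by
    rw [pf, Finset.sum_range_succ']
    congr 1
    · refine Finset.sum_congr rfl fun i hi => ?_
      have : j + 1 - (i + 1) = j - i := by omega
      rw [this]
    · norm_num
  have B : (q-1) * pf q j k x
      = (∑ i ∈ Finset.range j, (j.choose (i+1) : ℝ) * q^(i+1) * (q-1)^(j-i) * binom x (k-(i+1)))
        + (q-1)^(j+1) * binom x k := by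
    rw [pf, Finset.mul_sum, Finset.sum_range_succ']
    congr 1
    · refine Finset.sum_congr rfl fun i hi => ?_
      have h1 : j - i = (j - (i+1)) + 1 := by
        have := Finset.mem_range.1 hi; omega
      rw [h1, pow_succ]
      ring
    · norm_num; ring
  have C : (∑ i ∈ Finset.range (j+1), ((j+1).choose (i+1) : ℝ) * q^(i+1) * (q-1)^(j-i) * binom x (k-(i+1)))
      = (∑ i ∈ Finset.range (j+1), (j.choose i : ℝ) * q^(i+1) * (q-1)^(j-i) * binom x (k-(i+1)))
        + (∑ i ∈ Finset.range j, (j.choose (i+1) : ℝ) * q^(i+1) * (q-1)^(j-i) * binom x (k-(i+1))) := by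
    have split : ∀ i ∈ Finset.range (j+1),
        ((j+1).choose (i+1) : ℝ) * q^(i+1) * (q-1)^(j-i) * binom x (k-(i+1))
          = (j.choose i : ℝ) * q^(i+1) * (q-1)^(j-i) * binom x (k-(i+1))
            + (j.choose (i+1) : ℝ) * q^(i+1) * (q-1)^(j-i) * binom x (k-(i+1)) := by
      intro i _
      rw [Nat.choose_succ_succ]
      push_cast
      ring
    rw [Finset.sum_congr rfl split, Finset.sum_add_distrib]
    congr 1
    rw [Finset.sum_range_succ, Nat.choose_succ_self]
    simp
  linarith [A, B, C]

/-- One-step difference relation for `pf`. -/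
lemma pf_step (q : ℝ) {j k : ℕ} (hjk : j < k) (x : ℝ) :
    q * pf q j k (x + 1) - pf q j k x = pf q (j + 1) k x := by
  have per : ∀ i ∈ Finset.range (j+1),
      (j.choose i : ℝ) * q^(i+1) * (q-1)^(j-i) * binom (x+1) (k-i)
        - (j.choose i : ℝ) * q^i * (q-1)^(j-i) * binom x (k-i)
      = (q-1) * ((j.choose i : ℝ) * q^i * (q-1)^(j-i) * binom x (k-i))
        + (j.choose i : ℝ) * q^(i+1) * (q-1)^(j-i) * binom x (k-(i+1)) := by
    intro i hi
    have hi' : i ≤ j := Nat.lt_succ_iff.1 (Finset.mem_range.1 hi)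
    have hki : k - i = (k - (i+1)) + 1 := by omega
    rw [hki, binom_pascal x (k-(i+1))]
    ring
  have lhs : q * pf q j k (x + 1) - pf q j k x
      = ∑ i ∈ Finset.range (j+1),
          ((j.choose i : ℝ) * q^(i+1) * (q-1)^(j-i) * binom (x+1) (k-i)
            - (j.choose i : ℝ) * q^i * (q-1)^(j-i) * binom x (k-i)) := by
    rw [pf, pf, Finset.mul_sum, ← Finset.sum_sub_distrib]
    refine Finset.sum_congr rfl fun i _ => by ring
  rw [lhs, Finset.sum_congr rfl per, Finset.sum_add_distrib, ← Finset.mul_sum, ← pf, pf_succ]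

/-- Vanishing of `pf` at small natural arguments. -/
lemma pf_boundary (q : ℝ) {j k m : ℕ} (h : m + j < k) : pf q j k (m : ℝ) = 0 := by
  rw [pf]
  refine Finset.sum_eq_zero fun i hi => ?_
  have hi' : i ≤ j := Nat.lt_succ_iff.1 (Finset.mem_range.1 hi)
  rw [binom_nat_lt (by omega : m < k - i)]
  ring

/-- Iterated forward difference of the binomial polynomial `binom(·,a)`. -/
noncomputable def Db (a i : ℕ) (x : ℝ) : ℝ := if i ≤ a then binom x (a - i) else 0

lemma Db_zero (a : ℕ) (x : ℝ) : Db a 0 x = binom x a := by simp [Db]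

lemma Db_step (a i : ℕ) (x : ℝ) : Db a i (x + 1) - Db a i x = Db a (i + 1) x := by
  unfold Db
  rcases lt_or_ge i a with h | h
  · have h1 : i ≤ a := h.le
    have h2 : i + 1 ≤ a := h
    rw [if_pos h1, if_pos h1, if_pos h2]
    have : a - i = (a - (i+1)) + 1 := by omega
    rw [this, binom_pascal]
    ring
  · rcases eq_or_lt_of_le h with h' | h'
    · subst h'
      rw [if_pos le_rfl, if_pos le_rfl, if_neg (by omega)]
      simp [binom_zero]
    · rw [if_neg (by omega), if_neg (by omega), if_neg (by omega)]
      ring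

set_option maxHeartbeats 1000000 in
/-- Summability workhorse: `q^n · binom(n+m₁,b₁) · binom(n+m₂,b₂)`. -/
lemma summable_q_binom_binom {q : ℝ} (hq0 : 0 < q) (hq1 : q < 1) (m1 m2 b1 b2 : ℕ) :
    Summable (fun n : ℕ => q ^ n * (binom ((n : ℝ) + m1) b1 * binom ((n : ℝ) + m2) b2)) := by
  set K := b1 + b2
  have hsum : Summable (fun n : ℕ => ((n : ℝ) + 1) ^ K * q ^ n) := by
    have h0 : Summable (fun n : ℕ => (n : ℝ) ^ K * q ^ n) := by
      have := summable_pow_mul_geometric_of_norm_lt_one (R := ℝ) K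
        (r := q) (by rw [Real.norm_eq_abs, abs_of_pos hq0]; exact hq1)
      exact this
    have h1 : Summable (fun n : ℕ => ((n + 1 : ℕ) : ℝ) ^ K * q ^ (n + 1)) :=
      (summable_nat_add_iff 1).2 h0
    have h2 := h1.mul_left q⁻¹
    refine h2.congr fun n => ?_
    push_cast
    field_simp
    ring
  have hC : (0:ℝ) ≤ ((m1:ℝ)+1)^b1 * ((m2:ℝ)+1)^b2 := by positivity
  refine Summable.of_nonneg_of_le (fun n => ?_) (fun n => ?_)
    ((hsum.mul_left (((m1:ℝ)+1)^b1 * ((m2:ℝ)+1)^b2)))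
  · have e1 : binom ((n : ℝ) + m1) b1 = ((n + m1).choose b1 : ℝ) := by
      rw [show (n:ℝ) + m1 = ((n + m1 : ℕ) : ℝ) by push_cast; ring, binom_natCast]
    have e2 : binom ((n : ℝ) + m2) b2 = ((n + m2).choose b2 : ℝ) := by
      rw [show (n:ℝ) + m2 = ((n + m2 : ℕ) : ℝ) by push_cast; ring, binom_natCast]
    rw [e1, e2]
    positivity
  · have e1 : binom ((n : ℝ) + m1) b1 = ((n + m1).choose b1 : ℝ) := by
      rw [show (n:ℝ) + m1 = ((n + m1 : ℕ) : ℝ) by push_cast; ring, binom_natCast]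
    have e2 : binom ((n : ℝ) + m2) b2 = ((n + m2).choose b2 : ℝ) := by
      rw [show (n:ℝ) + m2 = ((n + m2 : ℕ) : ℝ) by push_cast; ring, binom_natCast]
    rw [e1, e2]
    have c1 : ((n + m1).choose b1 : ℝ) ≤ (((m1:ℝ)+1) * ((n:ℝ)+1)) ^ b1 := by
      calc ((n + m1).choose b1 : ℝ) ≤ ((n + m1 : ℕ) : ℝ) ^ b1 := by
            exact_mod_cast Nat.cast_le.2 (Nat.choose_le_pow (n + m1) b1)
        _ ≤ (((m1:ℝ)+1) * ((n:ℝ)+1)) ^ b1 := by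
            apply pow_le_pow_left₀ (by positivity)
            push_cast; nlinarith [Nat.cast_nonneg (α := ℝ) n, Nat.cast_nonneg (α := ℝ) m1]
    have c2 : ((n + m2).choose b2 : ℝ) ≤ (((m2:ℝ)+1) * ((n:ℝ)+1)) ^ b2 := by
      calc ((n + m2).choose b2 : ℝ) ≤ ((n + m2 : ℕ) : ℝ) ^ b2 := by
            exact_mod_cast Nat.cast_le.2 (Nat.choose_le_pow (n + m2) b2)
        _ ≤ (((m2:ℝ)+1) * ((n:ℝ)+1)) ^ b2 := by
            apply pow_le_pow_left₀ (by positivity)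
            push_cast; nlinarith [Nat.cast_nonneg (α := ℝ) n, Nat.cast_nonneg (α := ℝ) m2]
    have hb1 : (0:ℝ) ≤ ((n + m1).choose b1 : ℝ) := by positivity
    have hb2 : (0:ℝ) ≤ ((n + m2).choose b2 : ℝ) := by positivity
    have := mul_le_mul c1 c2 hb2 (by positivity)
    calc q ^ n * (((n + m1).choose b1 : ℝ) * ((n + m2).choose b2 : ℝ))
        ≤ q ^ n * ((((m1:ℝ)+1) * ((n:ℝ)+1)) ^ b1 * ((((m2:ℝ)+1)) * ((n:ℝ)+1)) ^ b2) := by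
          apply mul_le_mul_of_nonneg_left (by nlinarith) (by positivity)
      _ = ((m1:ℝ)+1)^b1 * ((m2:ℝ)+1)^b2 * (((n:ℝ)+1) ^ K * q ^ n) := by
          rw [mul_pow, mul_pow, show K = b1 + b2 from rfl, pow_add]
          ring

lemma Db_eq_mul (a i : ℕ) (x : ℝ) :
    Db a i x = (if i ≤ a then (1:ℝ) else 0) * binom x (a - i) := by
  unfold Db; split <;> simp

lemma summable_q_pf_db {q : ℝ} (hq0 : 0 < q) (hq1 : q < 1) (j k m a i : ℕ) :
    Summable (fun n : ℕ => q ^ n * (pf q j k ((n : ℝ) + m) * Db a i (n : ℝ))) := by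
  have base : ∀ b1 b2 : ℕ, Summable (fun n : ℕ =>
      q ^ n * (binom ((n : ℝ) + m) b1 * binom (n : ℝ) b2)) := by
    intro b1 b2
    refine (summable_q_binom_binom hq0 hq1 m 0 b1 b2).congr fun n => ?_
    norm_num
  have : Summable (fun n : ℕ => ∑ i' ∈ Finset.range (j+1),
      ((j.choose i' : ℝ) * q ^ i' * (q-1) ^ (j-i') * (if i ≤ a then (1:ℝ) else 0)) *
        (q ^ n * (binom ((n : ℝ) + m) (k - i') * binom (n : ℝ) (a - i)))) := by
    apply summable_sum
    intro i' _
    exact (base (k - i') (a - i)).mul_left _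
  refine this.congr fun n => ?_
  rw [pf, Db_eq_mul, Finset.sum_mul, Finset.mul_sum]
  refine Finset.sum_congr rfl fun i' _ => by ring

/-- Abel summation by parts for series with vanishing initial term. -/
lemma sbp {g f : ℕ → ℝ} (hg0 : g 0 = 0) (h1 : Summable fun n => g (n+1) * f n)
    (h2 : Summable fun n => g n * f n) :
    ∑' n : ℕ, (g (n+1) - g n) * f n = - ∑' n : ℕ, g (n+1) * (f (n+1) - f n) := by
  have h3 : Summable (fun n : ℕ => g (n+1) * f (n+1)) := (summable_nat_add_iff 1).2 h2
  have e1 : ∑' n : ℕ, (g (n+1) - g n) * f n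
      = (∑' n : ℕ, g (n+1) * f n) - ∑' n : ℕ, g n * f n := by
    rw [← Summable.tsum_sub h1 h2]; exact tsum_congr fun n => by ring
  have e2 : ∑' n : ℕ, g n * f n = ∑' n : ℕ, g (n+1) * f (n+1) := by
    rw [Summable.tsum_eq_zero_add h2, hg0]; simp
  have e3 : ∑' n : ℕ, g (n+1) * (f (n+1) - f n)
      = (∑' n : ℕ, g (n+1) * f (n+1)) - ∑' n : ℕ, g (n+1) * f n := by
    rw [← Summable.tsum_sub h3 h1]; exact tsum_congr fun n => by ring
  rw [e1, e2, e3]; ring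

lemma claim_step {q : ℝ} (hq0 : 0 < q) (hq1 : q < 1) (k a : ℕ) {i : ℕ} (hik : i < k) :
    ∑' n : ℕ, q ^ n * (pf q (k-i) k ((n : ℝ) + i) * Db a i (n : ℝ))
      = (-q) * ∑' n : ℕ, q ^ n * (pf q (k-(i+1)) k ((n : ℝ) + (i+1 : ℕ)) * Db a (i+1) (n : ℝ)) := by
  have hq : q ≠ 0 := ne_of_gt hq0
  set G : ℕ → ℝ := fun n => q ^ (n+i) * pf q (k-i-1) k ((n : ℝ) + i) with hG
  set F : ℕ → ℝ := fun n => Db a i (n : ℝ) with hF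
  have hcast : ∀ n : ℕ, ((n+1 : ℕ) : ℝ) + i = (n : ℝ) + ((i+1 : ℕ) : ℝ) := by
    intro n; push_cast; ring
  have hG0 : G 0 = 0 := by
    have : ((0:ℕ) : ℝ) + i = ((i : ℕ) : ℝ) := by push_cast; ring
    rw [hG]
    simp only [this]
    rw [pf_boundary q (show i + (k-i-1) < k by omega)]
    ring
  have h1 : Summable fun n => G (n+1) * F n := by
    refine ((summable_q_pf_db hq0 hq1 (k-i-1) k (i+1) a i).mul_left (q^(i+1))).congr fun n => ?_
    simp only [hG, hF]
    rw [hcast n]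
    ring
  have h2 : Summable fun n => G n * F n := by
    refine ((summable_q_pf_db hq0 hq1 (k-i-1) k i a i).mul_left (q^i)).congr fun n => ?_
    simp only [hG, hF]
    ring
  have key := sbp hG0 h1 h2
  have lhs_eq : ∑' n : ℕ, (G (n+1) - G n) * F n
      = q ^ i * ∑' n : ℕ, q ^ n * (pf q (k-i) k ((n : ℝ) + i) * Db a i (n : ℝ)) := by
    rw [← tsum_mul_left]
    refine tsum_congr fun n => ?_
    simp only [hG, hF]
    rw [hcast n]
    have hstep := pf_step q (show k-i-1 < k by omega) ((n : ℝ) + i)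
    have hj1 : (k-i-1) + 1 = k - i := by omega
    rw [hj1] at hstep
    rw [show ((n:ℝ) + ((i+1:ℕ):ℝ)) = ((n:ℝ) + (i:ℕ)) + 1 by push_cast; ring, ← hstep]
    ring
  have rhs_eq : ∑' n : ℕ, G (n+1) * (F (n+1) - F n)
      = q ^ i * (q * ∑' n : ℕ, q ^ n *
          (pf q (k-(i+1)) k ((n : ℝ) + (i+1 : ℕ)) * Db a (i+1) (n : ℝ))) := by
    rw [← tsum_mul_left, ← tsum_mul_left]
    refine tsum_congr fun n => ?_
    simp only [hG, hF]
    rw [hcast n]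
    have hdb : Db a i ((n+1 : ℕ) : ℝ) - Db a i (n : ℝ) = Db a (i+1) (n : ℝ) := by
      rw [show ((n+1 : ℕ) : ℝ) = (n : ℝ) + 1 by push_cast; ring]
      exact Db_step a i (n : ℝ)
    rw [hdb, show k - i - 1 = k - (i+1) by omega]
    rw [pow_add, pow_succ]
    ring
  rw [lhs_eq, rhs_eq, ← mul_neg] at key
  have := mul_left_cancel₀ (pow_ne_zero i hq) key
  rw [this]
  ring

lemma claim_induction {q : ℝ} (hq0 : 0 < q) (hq1 : q < 1) (k a : ℕ) :
    ∀ i, i ≤ k →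
      ∑' n : ℕ, q ^ n * (pf q k k (n : ℝ) * binom (n : ℝ) a)
        = (-1 : ℝ) ^ i * q ^ i *
            ∑' n : ℕ, q ^ n * (pf q (k-i) k ((n : ℝ) + i) * Db a i (n : ℝ)) := by
  intro i
  induction i with
  | zero =>
      intro _
      simp only [Nat.sub_zero, pow_zero, one_mul, Nat.cast_zero, add_zero, Db_zero]
  | succ i ih =>
      intro h
      rw [ih (by omega), claim_step hq0 hq1 k a (show i < k by omega)]
      ring

lemma orth_lt {q : ℝ} (hq0 : 0 < q) (hq1 : q < 1) {k a : ℕ} (hak : a < k) :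
    ∑' n : ℕ, q ^ n * (pf q k k (n : ℝ) * binom (n : ℝ) a) = 0 := by
  rw [claim_induction hq0 hq1 k a k le_rfl]
  have : ∀ n : ℕ, q ^ n * (pf q (k-k) k ((n : ℝ) + k) * Db a k (n : ℝ)) = 0 := by
    intro n
    rw [Db, if_neg (by omega)]
    ring
  rw [tsum_congr this]
  simp

lemma orth_eq {q : ℝ} (hq0 : 0 < q) (hq1 : q < 1) (k : ℕ) :
    ∑' n : ℕ, q ^ n * (pf q k k (n : ℝ) * binom (n : ℝ) k)
      = (-1 : ℝ) ^ k * q ^ k * (1 / (1 - q) ^ (k+1)) := by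
  rw [claim_induction hq0 hq1 k k k le_rfl]
  congr 1
  have : ∀ n : ℕ, q ^ n * (pf q (k-k) k ((n : ℝ) + k) * Db k k (n : ℝ))
      = ((n + k).choose k : ℝ) * q ^ n := by
    intro n
    rw [Nat.sub_self, pf_zero, Db, if_pos le_rfl, Nat.sub_self, binom_zero]
    rw [show (n:ℝ) + k = ((n + k : ℕ) : ℝ) by push_cast; ring, binom_natCast]
    ring
  rw [tsum_congr this]
  exact tsum_choose_mul_geometric_of_norm_lt_one k
    (by rw [Real.norm_eq_abs, abs_of_pos hq0]; exact hq1)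

lemma pf_expand (q : ℝ) (k : ℕ) (x : ℝ) :
    pf q k k x = ∑ j ∈ Finset.range (k+1), (k.choose j : ℝ) * q^(k-j) * (q-1)^j * binom x j := by
  rw [pf, ← Finset.sum_range_reflect]
  refine Finset.sum_congr rfl fun j hj => ?_
  have hj' : j ≤ k := Nat.lt_succ_iff.1 (Finset.mem_range.1 hj)
  have h1 : k + 1 - 1 - j = k - j := by omega
  have h2 : k - (k - j) = j := by omega
  rw [h1, h2, Nat.choose_symm hj']

lemma summable_q_pf_binom {q : ℝ} (hq0 : 0 < q) (hq1 : q < 1) (j k a : ℕ) :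
    Summable (fun n : ℕ => q ^ n * (pf q j k (n : ℝ) * binom (n : ℝ) a)) := by
  refine (summable_q_pf_db hq0 hq1 j k 0 a 0).congr fun n => ?_
  simp [Db_zero]

lemma summable_q_pf_pf {q : ℝ} (hq0 : 0 < q) (hq1 : q < 1) (j k : ℕ) :
    Summable (fun n : ℕ => q ^ n * (pf q j j (n : ℝ) * pf q k k (n : ℝ))) := by
  have : Summable (fun n : ℕ => ∑ i ∈ Finset.range (j+1),
      ((j.choose i : ℝ) * q ^ i * (q-1) ^ (j-i)) *
        (q ^ n * (pf q k k (n : ℝ) * binom (n : ℝ) (j - i)))) := by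
    apply summable_sum
    intro i _
    exact (summable_q_pf_binom hq0 hq1 k k (j-i)).mul_left _
  refine this.congr fun n => ?_
  set P := pf q k k (n : ℝ) with hP
  rw [pf, Finset.sum_mul, Finset.mul_sum]
  refine Finset.sum_congr rfl fun i _ => by ring

lemma orth_pp {q : ℝ} (hq0 : 0 < q) (hq1 : q < 1) {j k : ℕ} (hjk : j ≤ k) :
    ∑' n : ℕ, q ^ n * (pf q j j (n : ℝ) * pf q k k (n : ℝ))
      = if j = k then q ^ k / (1 - q) else 0 := by
  have h1q : (0:ℝ) < 1 - q := by linarith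
  have e : ∀ n : ℕ, q ^ n * (pf q j j (n : ℝ) * pf q k k (n : ℝ))
      = ∑ a ∈ Finset.range (j+1), ((j.choose a : ℝ) * q^(j-a) * (q-1)^a) *
          (q ^ n * (pf q k k (n : ℝ) * binom (n : ℝ) a)) := by
    intro n
    rw [pf_expand q j, Finset.sum_mul, Finset.mul_sum]
    refine Finset.sum_congr rfl fun a _ => by ring
  rw [tsum_congr e, Summable.tsum_finsetSum
    (fun a _ => (summable_q_pf_binom hq0 hq1 k k a).mul_left _)]
  rcases eq_or_lt_of_le hjk with rfl | hlt
  · rw [if_pos rfl]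
    rw [Finset.sum_eq_single_of_mem j (Finset.self_mem_range_succ j)]
    · rw [tsum_mul_left, orth_eq hq0 hq1 j, Nat.sub_self, Nat.choose_self]
      have hpow : ((q:ℝ)-1)^j * ((-1:ℝ))^j = (1-q)^j := by
        rw [← mul_pow]; congr 1; ring
      have h2 : ((1:ℝ)-q) ≠ 0 := ne_of_gt h1q
      simp only [Nat.choose_self, Nat.cast_one, Nat.sub_self, pow_zero, one_mul]
      rw [pow_succ]
      field_simp
      linear_combination hpow
    · intro a ha hne
      rw [tsum_mul_left, orth_lt hq0 hq1
        (show a < j by have := Finset.mem_range.1 ha; omega)]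
      ring
  · rw [if_neg (by omega)]
    refine Finset.sum_eq_zero fun a ha => ?_
    rw [tsum_mul_left, orth_lt hq0 hq1
      (show a < k by have := Finset.mem_range.1 ha; omega)]
    ring

lemma orth_pp' {q : ℝ} (hq0 : 0 < q) (hq1 : q < 1) (j k : ℕ) :
    ∑' n : ℕ, q ^ n * (pf q j j (n : ℝ) * pf q k k (n : ℝ))
      = if j = k then q ^ k / (1 - q) else 0 := by
  rcases le_or_gt j k with h | h
  · exact orth_pp hq0 hq1 h
  · have := orth_pp hq0 hq1 h.le
    rw [if_neg (by omega)] at this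
    rw [if_neg (by omega), ← this]
    exact tsum_congr fun n => by ring

/-- The polynomial `P_c(x) = ∑_{k=0}^d c_k · binom(x,k)`. -/
noncomputable def Pc {d : ℕ} (c : Fin (d + 1) → ℝ) (x : ℝ) : ℝ :=
  ∑ k : Fin (d + 1), c k * binom x (k : ℕ)

set_option maxHeartbeats 1600000 in
/-- The volume of `{c ∈ ℝ^{d+1} : ∑_{n≥0} P_c(n)² A^{-2n} ≤ t²}` equals
`(A²-1)^{(d+1)²/2} · A^{-(d+1)(d+2)/2} · t^{d+1} · ω_{d+1}`, where `ω_{d+1}` is the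
volume of the unit Euclidean ball in `ℝ^{d+1}`. -/
theorem stmt_19 (A t : ℝ) (hA : 1 < A) (ht : 0 < t) (d : ℕ) :
    (volume {c : Fin (d + 1) → ℝ |
        (∑' n : ℕ, (Pc c (n : ℝ)) ^ 2 / A ^ (2 * n)) ≤ t ^ 2}).toReal
      = (A ^ 2 - 1) ^ ((((d : ℝ) + 1) ^ 2) / 2) * (A ^ (((d + 1) * (d + 2)) / 2))⁻¹ *
          t ^ (d + 1) *
          (volume (Metric.ball (0 : EuclideanSpace ℝ (Fin (d + 1))) 1)).toReal := by
  have hA0 : (0:ℝ) < A := by linarith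
  have hA2 : (1:ℝ) < A ^ 2 := by nlinarith
  set q : ℝ := (A ^ 2)⁻¹ with hq
  have hq0 : 0 < q := by positivity
  have hq1 : q < 1 := by
    rw [hq]
    exact inv_lt_one_of_one_lt₀ hA2
  have h1q : (0:ℝ) < 1 - q := by linarith
  set w : ℕ → ℝ := fun k => Real.sqrt (1 - q) * A ^ k with hw
  set M : Matrix (Fin (d+1)) (Fin (d+1)) ℝ :=
    fun jj kk => w (kk:ℕ) * (((kk:ℕ).choose (jj:ℕ) : ℝ) * q^((kk:ℕ)-(jj:ℕ)) * (q-1)^((jj:ℕ))) with hM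
  -- row sums give the orthogonal polynomials
  have hrow : ∀ (kk : Fin (d+1)) (n : ℕ),
      (∑ jj : Fin (d+1), M jj kk * binom (n:ℝ) (jj:ℕ)) = w (kk:ℕ) * pf q kk kk (n:ℝ) := by
    intro kk n
    have e1 : (∑ jj : Fin (d+1), M jj kk * binom (n:ℝ) (jj:ℕ))
        = ∑ j ∈ Finset.range (d+1),
            w (kk:ℕ) * (((kk:ℕ).choose j : ℝ) * q^((kk:ℕ)-j) * (q-1)^j) * binom (n:ℝ) j := by
      rw [← Fin.sum_univ_eq_sum_range (fun j =>
        w (kk:ℕ) * (((kk:ℕ).choose j : ℝ) * q^((kk:ℕ)-j) * (q-1)^j) * binom (n:ℝ) j) (d+1)]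
    rw [e1]
    have e2 : ∑ j ∈ Finset.range (d+1),
        w (kk:ℕ) * (((kk:ℕ).choose j : ℝ) * q^((kk:ℕ)-j) * (q-1)^j) * binom (n:ℝ) j
        = ∑ j ∈ Finset.range ((kk:ℕ)+1),
            w (kk:ℕ) * (((kk:ℕ).choose j : ℝ) * q^((kk:ℕ)-j) * (q-1)^j) * binom (n:ℝ) j := by
      symm
      apply Finset.sum_subset
      · intro x hx
        have := Finset.mem_range.1 hx
        exact Finset.mem_range.2 (by omega : x < d + 1)
      · intro x _ hx
        have hxk : (kk:ℕ) < x := by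
          by_contra hc
          exact hx (Finset.mem_range.2 (by omega))
        rw [Nat.choose_eq_zero_of_lt hxk]
        ring
    rw [e2, pf_expand, Finset.mul_sum]
    refine Finset.sum_congr rfl fun j _ => by ring
  -- the polynomial associated with transformed coefficients
  have hPc : ∀ (u : Fin (d+1) → ℝ) (n : ℕ),
      Pc (Matrix.toLin' M u) (n:ℝ)
        = ∑ kk : Fin (d+1), u kk * (w (kk:ℕ) * pf q kk kk (n:ℝ)) := by
    intro u n
    have happ : ∀ jj, (Matrix.toLin' M u) jj = ∑ kk : Fin (d+1), M jj kk * u kk := by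
      intro jj
      simp [Matrix.toLin'_apply, Matrix.mulVec, dotProduct]
    rw [Pc]
    calc ∑ jj : Fin (d+1), (Matrix.toLin' M u) jj * binom (n:ℝ) (jj:ℕ)
        = ∑ jj : Fin (d+1), ∑ kk : Fin (d+1), u kk * (M jj kk * binom (n:ℝ) (jj:ℕ)) := by
          refine Finset.sum_congr rfl fun jj _ => ?_
          rw [happ jj, Finset.sum_mul]
          refine Finset.sum_congr rfl fun kk _ => by ring
      _ = ∑ kk : Fin (d+1), u kk * ∑ jj : Fin (d+1), M jj kk * binom (n:ℝ) (jj:ℕ) := by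
          rw [Finset.sum_comm]
          refine Finset.sum_congr rfl fun kk _ => by rw [Finset.mul_sum]
      _ = ∑ kk : Fin (d+1), u kk * (w (kk:ℕ) * pf q kk kk (n:ℝ)) := by
          refine Finset.sum_congr rfl fun kk _ => by rw [hrow kk n]
  -- the quadratic form is the Euclidean norm squared
  have hQ : ∀ u : Fin (d+1) → ℝ,
      (∑' n : ℕ, (Pc (Matrix.toLin' M u) (n : ℝ)) ^ 2 / A ^ (2 * n))
        = ∑ kk : Fin (d+1), (u kk) ^ 2 := by
    intro u
    have hdiv : ∀ (n : ℕ) (x : ℝ), x / A ^ (2 * n) = q ^ n * x := by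
      intro n x
      rw [hq, pow_mul, ← inv_pow]
      ring
    have e1 : ∀ n : ℕ, (Pc (Matrix.toLin' M u) (n : ℝ)) ^ 2 / A ^ (2 * n)
        = ∑ jj : Fin (d+1), ∑ kk : Fin (d+1),
            (u jj * w (jj:ℕ) * (u kk * w (kk:ℕ))) *
              (q ^ n * (pf q jj jj (n:ℝ) * pf q kk kk (n:ℝ))) := by
      intro n
      rw [hdiv, hPc u n, pow_two, Finset.sum_mul_sum, Finset.mul_sum]
      refine Finset.sum_congr rfl fun jj _ => ?_
      rw [Finset.mul_sum]
      refine Finset.sum_congr rfl fun kk _ => by ring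
    rw [tsum_congr e1]
    have hsummand : ∀ (jj kk : Fin (d+1)), Summable (fun n : ℕ =>
        u jj * w (jj:ℕ) * (u kk * w (kk:ℕ)) * (q ^ n * (pf q jj jj (n:ℝ) * pf q kk kk (n:ℝ)))) :=
      fun jj kk => (summable_q_pf_pf hq0 hq1 jj kk).mul_left _
    have swap1 := Summable.tsum_finsetSum (f := fun (jj : Fin (d+1)) (n : ℕ) =>
        ∑ kk : Fin (d+1), u jj * w (jj:ℕ) * (u kk * w (kk:ℕ)) *
          (q ^ n * (pf q jj jj (n:ℝ) * pf q kk kk (n:ℝ))))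
      (s := Finset.univ) (fun jj _ => summable_sum (fun kk _ => hsummand jj kk))
    rw [swap1]
    have e2 : ∀ jj : Fin (d+1),
        (∑' n : ℕ, ∑ kk : Fin (d+1),
          (u jj * w (jj:ℕ) * (u kk * w (kk:ℕ))) *
            (q ^ n * (pf q jj jj (n:ℝ) * pf q kk kk (n:ℝ)))) = (u jj) ^ 2 := by
      intro jj
      have swap2 := Summable.tsum_finsetSum (f := fun (kk : Fin (d+1)) (n : ℕ) =>
          u jj * w (jj:ℕ) * (u kk * w (kk:ℕ)) *
            (q ^ n * (pf q jj jj (n:ℝ) * pf q kk kk (n:ℝ))))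
        (s := Finset.univ) (fun kk _ => hsummand jj kk)
      rw [swap2]
      have e3 : ∀ kk : Fin (d+1),
          (∑' n : ℕ, (u jj * w (jj:ℕ) * (u kk * w (kk:ℕ))) *
            (q ^ n * (pf q jj jj (n:ℝ) * pf q kk kk (n:ℝ))))
          = (u jj * w (jj:ℕ) * (u kk * w (kk:ℕ))) *
              (if (jj:ℕ) = (kk:ℕ) then q ^ (kk:ℕ) / (1 - q) else 0) := by
        intro kk
        rw [tsum_mul_left, orth_pp' hq0 hq1 jj kk]
      rw [Finset.sum_congr rfl fun kk _ => e3 kk]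
      rw [Finset.sum_eq_single_of_mem jj (Finset.mem_univ jj)]
      · rw [if_pos rfl]
        have hsq : Real.sqrt (1 - q) ^ 2 = 1 - q := Real.sq_sqrt h1q.le
        have hAq : A ^ (2 * (jj:ℕ)) * q ^ (jj:ℕ) = 1 := by
          rw [hq, pow_mul, ← mul_pow, mul_inv_cancel₀ (by positivity : (A:ℝ)^2 ≠ 0), one_pow]
        have h1q' : (1 - q) ≠ 0 := ne_of_gt h1q
        simp only [hw]
        have expand : u jj * (Real.sqrt (1-q) * A^(jj:ℕ)) * (u jj * (Real.sqrt (1-q) * A^(jj:ℕ)))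
              * (q ^ (jj:ℕ) / (1 - q))
            = (u jj)^2 * ((Real.sqrt (1-q))^2 / (1-q)) * (A^(2*(jj:ℕ)) * q^(jj:ℕ)) := by
          rw [two_mul, pow_add]; ring
        rw [expand, hsq, hAq, div_self h1q']
        ring
      · intro kk _ hne
        rw [if_neg (fun h => hne (Fin.val_injective h.symm))]
        ring
    rw [Finset.sum_congr rfl fun jj _ => e2 jj]
  -- determinant of M
  have hdiagEntry : ∀ kk : Fin (d+1),
      M kk kk = Real.sqrt (1-q) * A^(kk:ℕ) * (q-1)^(kk:ℕ) := by
    intro kk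
    simp only [hM, hw]
    rw [Nat.choose_self, Nat.sub_self]
    push_cast
    ring
  have htri : M.BlockTriangular id := by
    intro i j hij
    simp only [hM]
    rw [Nat.choose_eq_zero_of_lt (show (j:ℕ) < (i:ℕ) from hij)]
    ring
  have hdet : M.det = ∏ kk : Fin (d+1), (Real.sqrt (1-q) * A^(kk:ℕ) * (q-1)^(kk:ℕ)) := by
    rw [Matrix.det_of_upperTriangular htri]
    exact Finset.prod_congr rfl fun kk _ => hdiagEntry kk
  have hsqrt_pos : (0:ℝ) < Real.sqrt (1-q) := Real.sqrt_pos.2 h1q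
  have hq1' : q - 1 ≠ 0 := by linarith
  have hdet_ne : M.det ≠ 0 := by
    rw [hdet]
    apply Finset.prod_ne_zero_iff.2
    intro kk _
    exact mul_ne_zero (mul_ne_zero (ne_of_gt hsqrt_pos) (by positivity)) (pow_ne_zero _ hq1')
  -- the set is the image of a Euclidean ball
  set Bset : Set (Fin (d+1) → ℝ) := {u | ∑ kk : Fin (d+1), (u kk)^2 ≤ t^2} with hBset
  have hinv : Invertible M := M.invertibleOfIsUnitDet (isUnit_iff_ne_zero.2 hdet_ne)
  have happly : ∀ u, (M.toLinearEquiv' hinv) u = Matrix.toLin' M u := fun u => rfl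
  have hSet : {c : Fin (d + 1) → ℝ |
        (∑' n : ℕ, (Pc c (n : ℝ)) ^ 2 / A ^ (2 * n)) ≤ t ^ 2}
      = (Matrix.toLin' M) '' Bset := by
    ext c
    simp only [Set.mem_setOf_eq, Set.mem_image]
    constructor
    · intro hc
      refine ⟨(M.toLinearEquiv' hinv).symm c, ?_, ?_⟩
      · have hc' : Matrix.toLin' M ((M.toLinearEquiv' hinv).symm c) = c := by
          rw [← happly]
          exact (M.toLinearEquiv' hinv).apply_symm_apply c
        show ∑ kk : Fin (d+1), (((M.toLinearEquiv' hinv).symm c) kk)^2 ≤ t^2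
        rw [← hQ ((M.toLinearEquiv' hinv).symm c), hc']
        exact hc
      · rw [← happly]
        exact (M.toLinearEquiv' hinv).apply_symm_apply c
    · rintro ⟨u, hu, rfl⟩
      rw [hQ u]
      exact hu
  -- volume of Bset
  have hBvol : volume Bset = ENNReal.ofReal (t^(d+1)) *
      volume (Metric.ball (0 : EuclideanSpace ℝ (Fin (d + 1))) 1) := by
    have hcont : Continuous fun u : Fin (d+1) → ℝ => ∑ kk : Fin (d+1), (u kk)^2 := by
      continuity
    have hmeas : MeasurableSet Bset :=
      measurableSet_le hcont.measurable measurable_const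
    have hpre := (EuclideanSpace.volume_preserving_symm_measurableEquiv_toLp
      (Fin (d+1))).measure_preimage hmeas.nullMeasurableSet
    have hpre_set : (MeasurableEquiv.toLp 2 (Fin (d+1) → ℝ)).symm ⁻¹' Bset
        = Metric.closedBall (0 : EuclideanSpace ℝ (Fin (d + 1))) t := by
      ext x
      have hx : ∀ kk, (MeasurableEquiv.toLp 2 (Fin (d+1) → ℝ)).symm x kk = x kk := fun kk => rfl
      simp only [Set.mem_preimage, hBset, Set.mem_setOf_eq, Metric.mem_closedBall,
        dist_zero_right, hx]
      have hnorm : ‖x‖ = Real.sqrt (∑ kk : Fin (d+1), (x kk)^2) := by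
        rw [EuclideanSpace.norm_eq]
        congr 1
        refine Finset.sum_congr rfl fun kk _ => ?_
        rw [Real.norm_eq_abs, sq_abs]
      constructor
      · intro h
        rw [hnorm]
        calc Real.sqrt (∑ kk : Fin (d+1), (x kk)^2) ≤ Real.sqrt (t^2) := Real.sqrt_le_sqrt h
          _ = t := Real.sqrt_sq ht.le
      · intro h
        have h2 : ‖x‖^2 ≤ t^2 := by
          apply pow_le_pow_left₀ (norm_nonneg x) h
        rw [hnorm, Real.sq_sqrt (by positivity)] at h2
        exact h2
    rw [← hpre, hpre_set]
    have := Measure.addHaar_closedBall (volume : Measure (EuclideanSpace ℝ (Fin (d+1))))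
      (0 : EuclideanSpace ℝ (Fin (d+1))) ht.le
    rw [this, finrank_euclideanSpace_fin]
  -- putting the measure computation together
  have hvol : (volume {c : Fin (d + 1) → ℝ |
        (∑' n : ℕ, (Pc c (n : ℝ)) ^ 2 / A ^ (2 * n)) ≤ t ^ 2}).toReal
      = |M.det| * t^(d+1) *
          (volume (Metric.ball (0 : EuclideanSpace ℝ (Fin (d + 1))) 1)).toReal := by
    rw [hSet, Measure.addHaar_image_linearMap volume (Matrix.toLin' M) Bset,
      LinearMap.det_toLin', hBvol]
    rw [← mul_assoc, ← ENNReal.ofReal_mul (abs_nonneg _)]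
    rw [ENNReal.toReal_mul, ENNReal.toReal_ofReal (by positivity)]
  rw [hvol]
  -- compute |det M|
  have hC : (0:ℝ) < A^2 - 1 := by linarith
  set T : ℕ := ∑ i ∈ Finset.range (d+1), i with hT
  have h2T : T * 2 = (d+1) * d := by
    rw [hT]
    exact Finset.sum_range_id_mul_two (d+1)
  have hprod : M.det = ∏ k ∈ Finset.range (d+1),
      (Real.sqrt (1-q) * A^k * (q-1)^k) := by
    rw [hdet]
    exact Fin.prod_univ_eq_prod_range (fun k => Real.sqrt (1-q) * A^k * (q-1)^k) (d+1)
  have habs : |M.det| = ∏ k ∈ Finset.range (d+1),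
      (Real.sqrt (1-q) * A^k * (1-q)^k) := by
    rw [hprod, Finset.abs_prod]
    refine Finset.prod_congr rfl fun k _ => ?_
    rw [abs_mul, abs_mul, abs_of_pos hsqrt_pos, abs_of_pos (pow_pos hA0 k), abs_pow,
      abs_sub_comm, abs_of_pos h1q]
  have hsplit : ∏ k ∈ Finset.range (d+1), (Real.sqrt (1-q) * A^k * (1-q)^k)
      = (Real.sqrt (1-q))^(d+1) * (A^T * (1-q)^T) := by
    rw [Finset.prod_mul_distrib, Finset.prod_mul_distrib, Finset.prod_const,
      Finset.prod_pow_eq_pow_sum, Finset.prod_pow_eq_pow_sum, Finset.card_range, ← hT]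
    ring
  have h1qA : 1 - q = (A^2-1)/A^2 := by
    rw [hq]
    field_simp
  have hsq1q : Real.sqrt (1-q) = Real.sqrt (A^2-1) / A := by
    rw [h1qA, Real.sqrt_div hC.le, Real.sqrt_sq hA0.le]
  -- the rpow identity
  have hrpow : (A^2-1) ^ ((((d:ℝ) + 1)^2)/2)
      = (Real.sqrt (A^2-1))^(d+1) * (A^2-1)^T := by
    have hexp : (((d:ℝ) + 1)^2)/2 = (T:ℝ) + ((d+1 : ℕ) : ℝ) * (1/2 : ℝ) := by
      have : ((T:ℝ)) * 2 = ((d:ℝ)+1) * d := by exact_mod_cast h2T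
      push_cast
      nlinarith [this]
    rw [hexp, Real.rpow_add hC, Real.rpow_natCast, mul_comm ((((d:ℕ)+1 : ℕ) : ℝ)) (1/2 : ℝ),
      Real.rpow_mul hC.le, Real.rpow_natCast, ← Real.sqrt_eq_rpow]
    ring
  have hN : ((d + 1) * (d + 2)) / 2 = T + (d + 1) := by
    have e1 : (d+1)*d = d*d+d := by ring
    have e2 : (d+1)*(d+2) = d*d+3*d+2 := by ring
    omega
  have hfinal : |M.det| = (A ^ 2 - 1) ^ ((((d : ℝ) + 1) ^ 2) / 2) *
      (A ^ (((d + 1) * (d + 2)) / 2))⁻¹ := by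
    rw [habs, hsplit, hsq1q, hrpow, hN]
    have hAne : A ≠ 0 := ne_of_gt hA0
    rw [h1qA]
    simp only [div_pow, ← pow_mul]
    field_simp
    ring
  rw [hfinal]
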